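/- An ideal I on ℕ (containing Fin) with the Baire property is meager in {0,1}^ℕ, and consequently no maximal ideal has the Baire property. -/

import Mathlib

/-- The homeomorphism of `ℕ → Bool` given by XOR-ing with a fixed mask `d`. -/
def xorHomeo (d : ℕ → Bool) : (ℕ → Bool) ≃ₜ (ℕ → Bool) where
  toEquiv := Function.Involutive.toPerm (fun y => fun n => xor (y n) (d n))
    (fun y => funext fun n => by simp [Bool.xor_assoc])
  continuous_toFun := continuous_pi fun n => by
    exact Continuous.comp (continuous_of_discreteTopology (f := fun b : Bool => xor b (d n)))
      (continuous_apply n)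
  continuous_invFun := continuous_pi fun n => by
    exact Continuous.comp (continuous_of_discreteTopology (f := fun b : Bool => xor b (d n)))
      (continuous_apply n)

open Classical in
/-- An ideal on `ℕ` (containing `Fin`) with the Baire property is meager in `{0,1}^ℕ`,
and consequently no maximal ideal has the Baire property. -/
theorem ideal_baire_property_meager (I : Set (Set ℕ))
    (hdown : ∀ A ∈ I, ∀ B ⊆ A, B ∈ I)
    (hunion : ∀ A ∈ I, ∀ B ∈ I, A ∪ B ∈ I)
    (hproper : (Set.univ : Set ℕ) ∉ I)
    (hfin : ∀ A : Set ℕ, A.Finite → A ∈ I) :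
    (BaireMeasurableSet ((fun A : Set ℕ => fun n => if n ∈ A then true else false) '' I :
        Set (ℕ → Bool)) →
      IsMeagre ((fun A : Set ℕ => fun n => if n ∈ A then true else false) '' I :
        Set (ℕ → Bool))) ∧
    ((∀ A : Set ℕ, A ∈ I ∨ Aᶜ ∈ I) →
      ¬ BaireMeasurableSet ((fun A : Set ℕ => fun n => if n ∈ A then true else false) '' I :
        Set (ℕ → Bool))) := by
  letI := TopologicalSpace.upgradeIsCompletelyMetrizable (ℕ → Bool)
  set S : Set (ℕ → Bool) :=
    (fun A : Set ℕ => fun n => if n ∈ A then true else false) '' I with hSdef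
  -- membership characterization
  have memS : ∀ x : ℕ → Bool, x ∈ S ↔ {n | x n = true} ∈ I := by
    intro x
    constructor
    · rintro ⟨A, hA, rfl⟩
      have : {n | (if n ∈ A then true else false) = true} = A := by
        ext n; by_cases h : n ∈ A <;> simp [h]
      rwa [this]
    · intro hx
      refine ⟨{n | x n = true}, hx, funext fun n => ?_⟩
      by_cases h : x n = true
      · simp [Set.mem_setOf_eq, h]
      · rw [Bool.not_eq_true] at h; simp [Set.mem_setOf_eq, h]
  -- closure under finite modification
  have clos : ∀ y z : ℕ → Bool, ∀ F : Finset ℕ, z ∈ S →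
      (∀ n, n ∉ F → y n = z n) → y ∈ S := by
    intro y z F hz hyz
    rw [memS] at hz ⊢
    have hsub : {n | y n = true} ⊆ {n | z n = true} ∪ ↑F := by
      intro n hn
      by_cases h : n ∈ F
      · exact Or.inr h
      · exact Or.inl (by rw [Set.mem_setOf_eq, ← hyz n h]; exact hn)
    exact hdown _ (hunion _ hz _ (hfin _ F.finite_toSet)) _ hsub
  have core : BaireMeasurableSet S → IsMeagre S := by
    intro hBP
    by_contra hnm
    obtain ⟨U, hUo, hSU⟩ := hBP.residualEq_isOpen
    have hres : {x : ℕ → Bool | x ∈ S ↔ x ∈ U} ∈ residual (ℕ → Bool) := by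
      filter_upwards [hSU] with x hx
      exact iff_of_eq hx
    obtain ⟨x₀, hx₀⟩ : U.Nonempty := by
      rcases Set.eq_empty_or_nonempty U with h | h
      · exfalso; apply hnm
        rw [IsMeagre]
        filter_upwards [hres] with x hx hxS
        rw [h] at hx
        exact hx.mp hxS
      · exact h
    obtain ⟨F, u, hu, hsub⟩ := (isOpen_pi_iff.mp hUo) x₀ hx₀
    set C : Set (ℕ → Bool) := {y | ∀ i ∈ F, y i = x₀ i} with hC
    have hCU : C ⊆ U := by
      intro y hy
      apply hsub
      rw [Set.mem_pi]
      intro i hi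
      have hi' : i ∈ F := hi
      rw [hy i hi']
      exact (hu i hi').2
    have hCmS : IsMeagre (C \ S) := by
      have hss : C \ S ⊆ {x : ℕ → Bool | x ∈ S ↔ x ∈ U}ᶜ := by
        rintro x ⟨hxC, hxS⟩ hx
        exact hxS (hx.mpr (hCU hxC))
      exact IsMeagre.mono (hs := by rwa [IsMeagre, compl_compl]) (hts := hss)
    have key : ∀ σ : {i // i ∈ F} → Bool,
        IsMeagre ({y : ℕ → Bool | ∀ i, (h : i ∈ F) → y i = σ ⟨i, h⟩} \ S) := by
      intro σ
      set d : ℕ → Bool := fun n => if h : n ∈ F then xor (x₀ n) (σ ⟨n, h⟩) else false with hd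
      have hmeag : IsMeagre ((xorHomeo d) ⁻¹' (C \ S)) :=
        hCmS.preimage_of_isOpenMap (xorHomeo d).continuous (xorHomeo d).isOpenMap
      refine IsMeagre.mono (hs := hmeag) ?_
      rintro y ⟨hyC, hyS⟩
      constructor
      · intro i hi
        show xor (y i) (d i) = x₀ i
        rw [hyC i hi, hd]
        simp only [dif_pos hi]
        cases x₀ i <;> cases σ ⟨i, hi⟩ <;> rfl
      · intro hz
        apply hyS
        apply clos y (xorHomeo d y) F hz
        intro n hn
        show y n = xor (y n) (d n)
        rw [hd]
        simp [hn]
    have hcover : Sᶜ ⊆ ⋃ σ : {i // i ∈ F} → Bool,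
        ({y : ℕ → Bool | ∀ i, (h : i ∈ F) → y i = σ ⟨i, h⟩} \ S) := by
      intro y hy
      exact Set.mem_iUnion.mpr ⟨fun i => y i, ⟨fun i h => rfl, hy⟩⟩
    have hSc : IsMeagre Sᶜ := by
      refine IsMeagre.mono (hts := hcover) ?_
      rw [IsMeagre, Set.compl_iUnion]
      exact countable_iInter_mem.mpr fun σ => key σ
    have hS_res : S ∈ residual (ℕ → Bool) := by
      rw [IsMeagre, compl_compl] at hSc; exact hSc
    have hflip : (xorHomeo (fun _ => true)) ⁻¹' S ∈ residual (ℕ → Bool) :=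
      tendsto_residual_of_isOpenMap (xorHomeo _).continuous (xorHomeo _).isOpenMap hS_res
    obtain ⟨x, hxS, hxF⟩ :
        (S ∩ (xorHomeo (fun _ => true)) ⁻¹' S).Nonempty :=
      (dense_of_mem_residual (Filter.inter_mem hS_res hflip)).nonempty
    rw [memS] at hxS
    have hxF' : {n | x n = true}ᶜ ∈ I := by
      have h2 := (memS _).mp hxF
      have heq : {n | (xorHomeo (fun _ => true) x) n = true} = {n | x n = true}ᶜ := by
        ext n
        show xor (x n) true = true ↔ ¬ x n = true
        cases x n <;> simp
      rwa [heq] at h2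
    have huniv : (Set.univ : Set ℕ) ∈ I := by
      have h3 := hunion _ hxS _ hxF'
      rwa [Set.union_compl_self] at h3
    exact hproper huniv
  refine ⟨core, ?_⟩
  intro hmax hBP
  have hM := core hBP
  have hM2 : IsMeagre ((xorHomeo (fun _ => true)) ⁻¹' S) :=
    hM.preimage_of_isOpenMap (xorHomeo _).continuous (xorHomeo _).isOpenMap
  have hcov : (Set.univ : Set (ℕ → Bool)) ⊆ S ∪ (xorHomeo (fun _ => true)) ⁻¹' S := by
    intro x _
    rcases hmax {n | x n = true} with h | h
    · exact Or.inl ((memS x).mpr h)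
    · refine Or.inr ?_
      show xorHomeo (fun _ => true) x ∈ S
      rw [memS]
      have heq : {n | (xorHomeo (fun _ => true) x) n = true} = {n | x n = true}ᶜ := by
        ext n
        show xor (x n) true = true ↔ ¬ x n = true
        cases x n <;> simp
      rw [heq]
      exact h
  have hmu : IsMeagre (Set.univ : Set (ℕ → Bool)) := by
    refine IsMeagre.mono (hts := hcov) ?_
    rw [IsMeagre, Set.compl_union]
    exact Filter.inter_mem hM hM2
  rw [IsMeagre, Set.compl_univ] at hmu
  obtain ⟨x, hx⟩ := (dense_of_mem_residual hmu).nonempty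
  exact hx
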